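/- Let n ∈ ℕ, α ∈ (0, π/4), λ ∈ ℂ with |λ| ≤ sin α, and t ∈ [0, 1]. Let D be the (n+1)×(n+1) complex diagonal matrix D = diag{(1 + λt)^{−2}, 1, …, 1}, and let M be an (n+1)×(n+1) complex matrix such that max_{i,j} |M_{ij} − D_{ij}| ≤ c, where c ≥ 0 satisfies (n+1)²·c < cos(2α)/4. Then for every ξ ∈ ℝ^{n+1}, Re( Σ_{i,j} ξ_i·M_{ij}·ξ_j ) ≥ ( cos(2α)/4 − (n+1)²·c )·‖ξ‖², where ‖ξ‖² = ξ₁² + ⋯ + ξ_{n+1}². -/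

import Mathlib

open Real Complex Finset

private lemma aux_bounds (s co t x y : ℝ) (hs0 : 0 < s) (hs1 : s < 1) (hco0 : 0 < co)
    (hsc : s ^ 2 + co ^ 2 = 1) (hn : x ^ 2 + y ^ 2 ≤ s ^ 2) (ht0 : 0 ≤ t) (ht1 : t ≤ 1) :
    co * |y * t| ≤ s * (1 + x * t) ∧ 1 - s ≤ 1 + x * t ∧
      (1 + x * t) * (1 + x * t) + (y * t) * (y * t) ≤ 4 := by
  have hx : |x| ≤ s := by
    rw [abs_le]; constructor <;> nlinarith [sq_nonneg y]
  obtain ⟨hx1, hx2⟩ := abs_le.mp hx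
  have hxt : x * t ≤ s := by nlinarith
  have hxt' : -s ≤ x * t := by nlinarith
  refine ⟨?_, by linarith, ?_⟩
  · rw [abs_mul, _root_.abs_of_nonneg ht0]
    set z := |y| with hz
    have hz0 : 0 ≤ z := abs_nonneg _
    have hz2 : z ^ 2 = y ^ 2 := _root_.sq_abs _
    have step1 : co * z - s * x ≤ s := by
      nlinarith [sq_nonneg (co * x + s * z)]
    have step2 : t * (co * z - s * x) ≤ s := by
      rcases le_or_gt (co * z - s * x) 0 with h | h
      · nlinarith
      · nlinarith
    nlinarith [step2]
  · have ht2 : t ^ 2 * (x ^ 2 + y ^ 2) ≤ s ^ 2 := by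
      have htt : (0:ℝ) ≤ 1 - t ^ 2 := by nlinarith
      nlinarith [mul_nonneg htt (add_nonneg (sq_nonneg x) (sq_nonneg y))]
    nlinarith

private lemma aux_sector (s co A B : ℝ) (hs0 : 0 < s) (hco0 : 0 < co)
    (hsc : s ^ 2 + co ^ 2 = 1) (hsco : s ≤ co) (hCB : co * |B| ≤ s * A) (hA0 : 0 < A)
    (hAB4 : A * A + B * B ≤ 4) :
    (co ^ 2 - s ^ 2) / 4 ≤ (A * A - B * B) / (A * A + B * B) ^ 2 := by
  have hCB2 : co * co * (B * B) ≤ s * s * (A * A) := by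
    nlinarith [mul_le_mul hCB hCB (mul_nonneg hco0.le (abs_nonneg B))
      (mul_nonneg hs0.le hA0.le), _root_.sq_abs B]
  have hABpos : 0 < A * A + B * B := by nlinarith
  have hkey : (co ^ 2 - s ^ 2) * (A * A + B * B) ≤ A * A - B * B := by nlinarith
  rw [div_le_div_iff₀ (by norm_num) (by positivity)]
  have h0 : 0 ≤ co ^ 2 - s ^ 2 := by nlinarith
  have hABnn : 0 ≤ A * A - B * B := by
    have := mul_nonneg h0 hABpos.le
    linarith
  have h1 : (co ^ 2 - s ^ 2) * (A * A + B * B) * (A * A + B * B) ≤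
      (A * A - B * B) * (A * A + B * B) := mul_le_mul_of_nonneg_right hkey hABpos.le
  have h2 : (A * A - B * B) * (A * A + B * B) ≤ (A * A - B * B) * 4 :=
    mul_le_mul_of_nonneg_left hAB4 hABnn
  nlinarith [h1, h2]

set_option maxHeartbeats 1000000 in
theorem perturbed_symbol_ellipticity (n : ℕ) (α : ℝ) (hα : α ∈ Set.Ioo 0 (Real.pi / 4))
    (lam : ℂ) (hlam : ‖lam‖ ≤ Real.sin α) (t : ℝ) (ht : t ∈ Set.Icc (0 : ℝ) 1)
    (D M : Matrix (Fin (n + 1)) (Fin (n + 1)) ℂ)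
    (hD : D = Matrix.diagonal (fun i => if i = 0 then ((1 + lam * t) ^ 2)⁻¹ else 1))
    (c : ℝ) (hc : 0 ≤ c) (hcsmall : ((n : ℝ) + 1) ^ 2 * c < Real.cos (2 * α) / 4)
    (hM : ∀ i j, ‖M i j - D i j‖ ≤ c) :
    ∀ ξ : Fin (n + 1) → ℝ,
      (∑ i, ∑ j, (ξ i : ℂ) * M i j * (ξ j : ℂ)).re
        ≥ (Real.cos (2 * α) / 4 - ((n : ℝ) + 1) ^ 2 * c) * ∑ i, ξ i ^ 2 := by
  intro ξ
  obtain ⟨hα0, hα4⟩ := hα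
  obtain ⟨ht0, ht1⟩ := ht
  have hπ := Real.pi_pos
  set s := Real.sin α with hsdef
  set co := Real.cos α with hcodef
  have hs0 : 0 < s := Real.sin_pos_of_pos_of_lt_pi hα0 (by linarith)
  have hco0 : 0 < co := Real.cos_pos_of_mem_Ioo ⟨by linarith, by linarith⟩
  have hsc : s ^ 2 + co ^ 2 = 1 := Real.sin_sq_add_cos_sq α
  have hs1 : s < 1 := by nlinarith
  have hcos2 : Real.cos (2 * α) = co ^ 2 - s ^ 2 := by
    rw [Real.cos_two_mul]; linarith
  have hcos2nn : 0 ≤ Real.cos (2 * α) :=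
    Real.cos_nonneg_of_mem_Icc ⟨by linarith, by linarith⟩
  have hcos2le : Real.cos (2 * α) ≤ 1 := Real.cos_le_one _
  have hn : lam.re ^ 2 + lam.im ^ 2 ≤ s ^ 2 := by
    have h1 : ‖lam‖ ^ 2 ≤ s ^ 2 := by
      nlinarith [norm_nonneg lam]
    rwa [Complex.sq_norm, Complex.normSq_apply, ← sq, ← sq] at h1
  set w : ℂ := 1 + lam * (t : ℂ) with hw
  set A : ℝ := w.re with hA
  set B : ℝ := w.im with hB
  have hAval : A = 1 + lam.re * t := by simp [hA, hw, Complex.add_re, Complex.mul_re]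
  have hBval : B = lam.im * t := by simp [hB, hw, Complex.add_im, Complex.mul_im]
  obtain ⟨hCB0, hApos0, hAB40⟩ :=
    aux_bounds s co t lam.re lam.im hs0 hs1 hco0 hsc hn ht0 ht1
  have hCB : co * |B| ≤ s * A := by rw [hAval, hBval]; exact hCB0
  have hApos : 1 - s ≤ A := by rw [hAval]; exact hApos0
  have hAB4 : A * A + B * B ≤ 4 := by rw [hAval, hBval]; exact hAB40
  have hA0 : 0 < A := by linarith
  have hr : Real.cos (2 * α) / 4 ≤ ((w ^ 2)⁻¹).re := by
    have hwre : (w ^ 2).re = A * A - B * B := by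
      rw [sq]; simp [Complex.mul_re, hA, hB]
    have hwns : Complex.normSq (w ^ 2) = (A * A + B * B) ^ 2 := by
      rw [sq, map_mul, Complex.normSq_apply, ← hA, ← hB]; ring
    rw [Complex.inv_re, hwre, hwns, hcos2]
    have hsco : s ≤ co := by
      rw [hsdef, hcodef, ← Real.cos_pi_div_two_sub]
      exact Real.cos_le_cos_of_nonneg_of_le_pi hα0.le (by linarith) (by linarith)
    exact aux_sector s co A B hs0 hco0 hsc hsco hCB hA0 hAB4
  -- diagonal part
  set d : Fin (n + 1) → ℂ := fun i => if i = 0 then ((1 + lam * (t : ℂ)) ^ 2)⁻¹ else 1 with hd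
  have hdiag : ∀ i, ∑ j, (ξ i : ℂ) * D i j * (ξ j : ℂ) = ((ξ i ^ 2 : ℝ) : ℂ) * d i := by
    intro i
    rw [hD]
    rw [Finset.sum_eq_single i]
    · simp only [Matrix.diagonal_apply_eq, hd]; push_cast; ring
    · intro j _ hji
      rw [Matrix.diagonal_apply_ne' _ hji]; ring
    · simp
  have hdre : ∀ i, Real.cos (2 * α) / 4 ≤ (d i).re := by
    intro i
    by_cases hi : i = 0
    · simpa [hd, hi, hw] using hr
    · simp only [hd, hi, if_false, Complex.one_re]; linarith
  have hDre : (Real.cos (2 * α) / 4) * ∑ i, ξ i ^ 2 ≤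
      (∑ i, ∑ j, (ξ i : ℂ) * D i j * (ξ j : ℂ)).re := by
    rw [Complex.re_sum]
    calc (Real.cos (2 * α) / 4) * ∑ i, ξ i ^ 2 = ∑ i, ξ i ^ 2 * (Real.cos (2 * α) / 4) := by
          rw [Finset.mul_sum]; exact Finset.sum_congr rfl fun i _ => mul_comm _ _
      _ ≤ ∑ i, (∑ j, (ξ i : ℂ) * D i j * (ξ j : ℂ)).re := by
          apply Finset.sum_le_sum
          intro i _
          rw [hdiag i, Complex.re_ofReal_mul]
          exact mul_le_mul_of_nonneg_left (hdre i) (sq_nonneg _)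
  -- perturbation part
  have hpert : |(∑ i, ∑ j, (ξ i : ℂ) * (M i j - D i j) * (ξ j : ℂ)).re|
      ≤ ((n : ℝ) + 1) ^ 2 * c * ∑ i, ξ i ^ 2 := by
    have h1 : ‖∑ i, ∑ j, (ξ i : ℂ) * (M i j - D i j) * (ξ j : ℂ)‖
        ≤ ∑ i, ∑ j, |ξ i| * c * |ξ j| := by
      refine le_trans (norm_sum_le _ _) (Finset.sum_le_sum fun i _ => ?_)
      refine le_trans (norm_sum_le _ _) (Finset.sum_le_sum fun j _ => ?_)
      rw [norm_mul, norm_mul, Complex.norm_real, Complex.norm_real, Real.norm_eq_abs, Real.norm_eq_abs]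
      exact mul_le_mul_of_nonneg_right
        (mul_le_mul_of_nonneg_left (hM i j) (abs_nonneg _)) (abs_nonneg _)
    have h2 : ∑ i, ∑ j, |ξ i| * c * |ξ j| = c * (∑ i, |ξ i|) ^ 2 := by
      rw [sq, Finset.sum_mul_sum, Finset.mul_sum]
      refine Finset.sum_congr rfl fun i _ => ?_
      rw [Finset.mul_sum]
      exact Finset.sum_congr rfl fun j _ => by ring
    have h3 : (∑ i, |ξ i|) ^ 2 ≤ ((n : ℝ) + 1) * ∑ i, ξ i ^ 2 := by
      have := sq_sum_le_card_mul_sum_sq (s := Finset.univ) (f := fun i => |ξ i|)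
      simpa [_root_.sq_abs] using this
    have hS : 0 ≤ ∑ i, ξ i ^ 2 := Finset.sum_nonneg fun i _ => sq_nonneg _
    have hN : (1 : ℝ) ≤ (n : ℝ) + 1 := by
      have := Nat.cast_nonneg (α := ℝ) n; linarith
    have h5 : (n : ℝ) + 1 ≤ ((n : ℝ) + 1) ^ 2 := by nlinarith
    calc |(∑ i, ∑ j, (ξ i : ℂ) * (M i j - D i j) * (ξ j : ℂ)).re|
        ≤ ‖∑ i, ∑ j, (ξ i : ℂ) * (M i j - D i j) * (ξ j : ℂ)‖ :=
          Complex.abs_re_le_norm _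
      _ ≤ ∑ i, ∑ j, |ξ i| * c * |ξ j| := h1
      _ = c * (∑ i, |ξ i|) ^ 2 := h2
      _ ≤ c * (((n : ℝ) + 1) * ∑ i, ξ i ^ 2) := mul_le_mul_of_nonneg_left h3 hc
      _ = ((n : ℝ) + 1) * (c * ∑ i, ξ i ^ 2) := by ring
      _ ≤ ((n : ℝ) + 1) ^ 2 * (c * ∑ i, ξ i ^ 2) :=
          mul_le_mul_of_nonneg_right h5 (mul_nonneg hc hS)
      _ = ((n : ℝ) + 1) ^ 2 * c * ∑ i, ξ i ^ 2 := by ring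
  have hsplit : (∑ i, ∑ j, (ξ i : ℂ) * M i j * (ξ j : ℂ))
      = (∑ i, ∑ j, (ξ i : ℂ) * D i j * (ξ j : ℂ))
        + ∑ i, ∑ j, (ξ i : ℂ) * (M i j - D i j) * (ξ j : ℂ) := by
    rw [← Finset.sum_add_distrib]
    refine Finset.sum_congr rfl fun i _ => ?_
    rw [← Finset.sum_add_distrib]
    exact Finset.sum_congr rfl fun j _ => by ring
  rw [hsplit, Complex.add_re, ge_iff_le, sub_mul]
  have habs := (abs_le.mp hpert).1
  linarith [hDre, habs]
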